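/- arXiv:2009.00592 — 2 statements merged into one kernel-verified Lean document; each statement's English description precedes it below -/
import Mathlib

section
/- For a fixed shape ρ ⊂ (ℤ₊)^d of a d-dimensional partition, the multivariable generating function identity holds: Σ_{π : shape(π) ⊆ ρ} ∏_{(i₁,...,i_{d+1}) ∈ Cor(π)} x^{(1)}_{i₁}···x^{(d)}_{i_d} = ∏_{(i₁,...,i_d) ∈ ρ} (1 − x^{(1)}_{i₁}···x^{(d)}_{i_d})^{−1}, as an identity of formal power series. -/
open scoped BigOperators

noncomputable section

namespace HDP

variable {d : ℕ}

/-- The step `i → i + e_ℓ` in `ℤ₊^d` (coordinates are 0-based). -/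
def step (i : Fin d → ℕ) (ℓ : Fin d) : Fin d → ℕ := Function.update i ℓ (i ℓ + 1)

/-- `p` is a directed lattice path of length `n` starting at `i`:
each step goes from a point to the point plus a standard basis vector. -/
def IsPathFrom (i : Fin d → ℕ) (n : ℕ) (p : ℕ → Fin d → ℕ) : Prop :=
  p 0 = i ∧ ∀ t < n, ∃ ℓ, p (t + 1) = step (p t) ℓ

/-- The last passage time `G(i)`: the maximum, over directed lattice paths starting
at `i`, of the sum of the entries of `A` along the path. -/
def lpt (A : (Fin d → ℕ) → ℕ) (i : Fin d → ℕ) : ℕ :=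
  sSup {s | ∃ n p, IsPathFrom i n p ∧ s = ∑ t ∈ Finset.range (n + 1), A (p t)}

/-- A `d`-dimensional partition: a finitely supported function `ℤ₊^d → ℕ`
which is weakly decreasing in each coordinate. -/
def IsPartition (π : (Fin d → ℕ) → ℕ) : Prop :=
  (Function.support π).Finite ∧ ∀ i j : Fin d → ℕ, (∀ k, i k ≤ j k) → π j ≤ π i

/-- The set of corners of a `d`-dimensional partition `π` : points `(i, k)` of the
diagram of `π` (i.e. `1 ≤ k ≤ π i`) such that `(i + e ℓ, k)` is not in the diagram
for every `ℓ ∈ [d]`. -/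
def Cor (π : (Fin d → ℕ) → ℕ) : Set ((Fin d → ℕ) × ℕ) :=
  {p | 1 ≤ p.2 ∧ p.2 ≤ π p.1 ∧ ∀ ℓ, π (step p.1 ℓ) < p.2}

/-- The number of corners of `π`. -/
def cor (π : (Fin d → ℕ) → ℕ) : ℕ := Nat.card (Cor π)

/-- The corner-hook volume of `π`: the sum over corners `(i, k)` of
`i₁ + ⋯ + i_d - d + 1` (in 1-based coordinates; with our 0-based
coordinates this cohook length is `(∑ j, i j) + 1`). -/
def chvol (π : (Fin d → ℕ) → ℕ) : ℕ := ∑ᶠ p ∈ Cor π, ((∑ j, p.1 j) + 1)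

/-- A set is down-closed for the componentwise order. -/
def DownClosed (ρ : Set (Fin d → ℕ)) : Prop :=
  ∀ i j : Fin d → ℕ, (∀ k, i k ≤ j k) → j ∈ ρ → i ∈ ρ

/-- The set of top corners of a shape `ρ`. -/
def Cr (ρ : Set (Fin d → ℕ)) : Set (Fin d → ℕ) := {i ∈ ρ | ∀ ℓ, step i ℓ ∉ ρ}

end HDP

namespace HDP

variable {d : ℕ}

lemma le_step (i : Fin d → ℕ) (ℓ k : Fin d) : i k ≤ step i ℓ k := by
  unfold step
  rcases eq_or_ne k ℓ with rfl | h
  · rw [Function.update_self]; omega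
  · rw [Function.update_of_ne h]

lemma sum_step (i : Fin d → ℕ) (ℓ : Fin d) : ∑ j, step i ℓ j = (∑ j, i j) + 1 := by
  unfold step
  rw [Finset.sum_update_of_mem (Finset.mem_univ ℓ),
    ← Finset.add_sum_erase _ i (Finset.mem_univ ℓ), Finset.sdiff_singleton_eq_erase]
  omega

lemma path_le {i : Fin d → ℕ} {n : ℕ} {p : ℕ → Fin d → ℕ} (h : IsPathFrom i n p) :
    ∀ t, t ≤ n → ∀ k, i k ≤ p t k := by
  intro t
  induction t with
  | zero => intro _ k; rw [h.1]
  | succ t ih =>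
    intro ht k
    obtain ⟨ℓ, hℓ⟩ := h.2 t (by omega)
    rw [hℓ]
    exact le_trans (ih (by omega) k) (le_step _ _ _)

lemma path_sum {i : Fin d → ℕ} {n : ℕ} {p : ℕ → Fin d → ℕ} (h : IsPathFrom i n p) :
    ∀ t, t ≤ n → ∑ j, p t j = (∑ j, i j) + t := by
  intro t
  induction t with
  | zero => simp [h.1]
  | succ t ih =>
    intro ht
    obtain ⟨ℓ, hℓ⟩ := h.2 t (by omega)
    rw [hℓ, sum_step, ih (by omega)]
    omega

def pathSet (A : (Fin d → ℕ) → ℕ) (i : Fin d → ℕ) : Set ℕ :=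
  {s | ∃ n p, IsPathFrom i n p ∧ s = ∑ t ∈ Finset.range (n + 1), A (p t)}

lemma lpt_eq_sSup (A : (Fin d → ℕ) → ℕ) (i : Fin d → ℕ) : lpt A i = sSup (pathSet A i) := rfl

lemma self_mem_pathSet (A : (Fin d → ℕ) → ℕ) (i : Fin d → ℕ) : A i ∈ pathSet A i :=
  ⟨0, fun _ => i, ⟨rfl, fun t ht => absurd ht (by omega)⟩, by simp⟩

lemma pathSet_le {A : (Fin d → ℕ) → ℕ} (hA : (Function.support A).Finite) (i : Fin d → ℕ) :
    ∀ s ∈ pathSet A i, s ≤ ∑ j ∈ hA.toFinset, A j := by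
  classical
  rintro s ⟨n, p, hp, rfl⟩
  have hinj : ∀ a ∈ Finset.range (n+1), ∀ b ∈ Finset.range (n+1), p a = p b → a = b := by
    intro a ha b hb hab
    rw [Finset.mem_range] at ha hb
    have h1 := path_sum hp a (by omega)
    have h2 := path_sum hp b (by omega)
    have h3 : ∑ j, p a j = ∑ j, p b j := by rw [hab]
    omega
  calc ∑ t ∈ Finset.range (n+1), A (p t)
      = ∑ t ∈ (Finset.range (n+1)).filter (fun t => A (p t) ≠ 0), A (p t) :=
        (Finset.sum_filter_ne_zero _).symm
    _ = ∑ j ∈ ((Finset.range (n+1)).filter (fun t => A (p t) ≠ 0)).image p, A j := by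
        rw [Finset.sum_image (fun a ha b hb => hinj a (Finset.mem_of_mem_filter a ha)
          b (Finset.mem_of_mem_filter b hb))]
    _ ≤ ∑ j ∈ hA.toFinset, A j := by
        apply Finset.sum_le_sum_of_subset
        intro j hj
        obtain ⟨t, ht, rfl⟩ := Finset.mem_image.mp hj
        rw [Set.Finite.mem_toFinset]
        exact (Finset.mem_filter.mp ht).2

lemma pathSet_bddAbove {A : (Fin d → ℕ) → ℕ} (hA : (Function.support A).Finite)
    (i : Fin d → ℕ) : BddAbove (pathSet A i) :=
  ⟨_, fun _ hs => pathSet_le hA i _ hs⟩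

lemma le_lpt {A : (Fin d → ℕ) → ℕ} (hA : (Function.support A).Finite) {i : Fin d → ℕ}
    {s : ℕ} (hs : s ∈ pathSet A i) : s ≤ lpt A i :=
  le_csSup (pathSet_bddAbove hA i) hs

lemma lpt_le {A : (Fin d → ℕ) → ℕ} {i : Fin d → ℕ} {b : ℕ}
    (h : ∀ s ∈ pathSet A i, s ≤ b) : lpt A i ≤ b :=
  csSup_le ⟨A i, self_mem_pathSet A i⟩ h

lemma lpt_mem {A : (Fin d → ℕ) → ℕ} (hA : (Function.support A).Finite) (i : Fin d → ℕ) :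
    lpt A i ∈ pathSet A i :=
  Nat.sSup_mem ⟨A i, self_mem_pathSet A i⟩ (pathSet_bddAbove hA i)

lemma lpt_rec {A : (Fin d → ℕ) → ℕ} (hA : (Function.support A).Finite) (i : Fin d → ℕ) :
    lpt A i = A i + Finset.univ.sup fun ℓ => lpt A (step i ℓ) := by
  apply le_antisymm
  · apply lpt_le
    rintro s ⟨n, p, hp, rfl⟩
    cases n with
    | zero =>
      have h0 : ∑ t ∈ Finset.range (0+1), A (p t) = A i := by simp [hp.1]
      rw [h0]; exact Nat.le_add_right _ _
    | succ m =>
      obtain ⟨ℓ, hℓ⟩ := hp.2 0 (by omega)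
      have hq : IsPathFrom (step i ℓ) m (fun t => p (t+1)) := by
        constructor
        · show p (0 + 1) = step i ℓ
          rw [hℓ, hp.1]
        · intro t ht; exact hp.2 (t+1) (by omega)
      have hsum : ∑ t ∈ Finset.range (m+1+1), A (p t)
          = ∑ t ∈ Finset.range (m+1), A (p (t+1)) + A (p 0) := Finset.sum_range_succ' _ _
      rw [hsum, hp.1]
      have h1 : ∑ t ∈ Finset.range (m+1), A (p (t+1)) ≤ lpt A (step i ℓ) :=
        le_lpt hA ⟨m, _, hq, rfl⟩
      have h2 : lpt A (step i ℓ) ≤ Finset.univ.sup fun ℓ => lpt A (step i ℓ) :=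
        Finset.le_sup (f := fun ℓ => lpt A (step i ℓ)) (Finset.mem_univ ℓ)
      omega
  · rcases (Finset.univ : Finset (Fin d)).eq_empty_or_nonempty with he | hne
    · rw [he, Finset.sup_empty]
      simpa using le_lpt hA (self_mem_pathSet A i)
    · obtain ⟨ℓ, -, hℓeq⟩ := Finset.exists_mem_eq_sup Finset.univ hne
        fun ℓ => lpt A (step i ℓ)
      rw [hℓeq]
      obtain ⟨n, q, hq, hsum⟩ := lpt_mem hA (step i ℓ)
      set p : ℕ → Fin d → ℕ := fun t => Nat.casesOn t i (fun u => q u) with hpdef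
      have hp : IsPathFrom i (n+1) p := by
        constructor
        · rfl
        · intro t ht
          cases t with
          | zero => exact ⟨ℓ, hq.1⟩
          | succ u => exact hq.2 u (by omega)
      have key : A i + lpt A (step i ℓ) = ∑ t ∈ Finset.range (n+1+1), A (p t) := by
        rw [Finset.sum_range_succ' (fun t => A (p t)) (n+1)]
        have : ∀ t, p (t+1) = q t := fun t => rfl
        simp only [this]
        rw [show p 0 = i from rfl, hsum]
        omega
      rw [key]
      exact le_lpt hA ⟨n+1, p, hp, rfl⟩

lemma lpt_eq_zero {A : (Fin d → ℕ) → ℕ} {i : Fin d → ℕ}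
    (h : ∀ j, (∀ k, i k ≤ j k) → A j = 0) : lpt A i = 0 := by
  have : lpt A i ≤ 0 := by
    apply lpt_le
    rintro s ⟨n, p, hp, rfl⟩
    rw [Finset.sum_eq_zero]
    intro t ht
    rw [Finset.mem_range] at ht
    exact h _ (path_le hp t (by omega))
  omega

lemma lpt_le_lpt {A : (Fin d → ℕ) → ℕ} (hA : (Function.support A).Finite)
    {i j : Fin d → ℕ} (hij : ∀ k, i k ≤ j k) : lpt A j ≤ lpt A i := by
  classical
  suffices H : ∀ n (i j : Fin d → ℕ), (∀ k, i k ≤ j k) → (∑ k, (j k - i k)) = n →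
      lpt A j ≤ lpt A i from H _ i j hij rfl
  intro n
  induction n with
  | zero =>
    intro i j hij hsum
    have hij' : i = j := funext fun k => le_antisymm (hij k) (by
      have := Finset.sum_eq_zero_iff.mp hsum k (Finset.mem_univ k); omega)
    rw [hij']
  | succ n ih =>
    intro i j hij hsum
    have hex : ∃ k₀, i k₀ < j k₀ := by
      by_contra hc
      push_neg at hc
      rw [Finset.sum_eq_zero (fun k _ => by have := hc k; omega)] at hsum
      omega
    obtain ⟨k₀, hk₀⟩ := hex
    have h1 : lpt A j ≤ lpt A (step i k₀) := by
      apply ih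
      · intro k
        rcases eq_or_ne k k₀ with rfl | hne
        · unfold step; rw [Function.update_self]; omega
        · unfold step; rw [Function.update_of_ne hne]; exact hij k
      · have hsplit : ∀ f : Fin d → ℕ, ∑ k, f k = f k₀ + ∑ k ∈ Finset.univ.erase k₀, f k :=
          fun f => (Finset.add_sum_erase _ f (Finset.mem_univ k₀)).symm
        rw [hsplit] at hsum ⊢
        have he : ∑ k ∈ Finset.univ.erase k₀, (j k - step i k₀ k)
            = ∑ k ∈ Finset.univ.erase k₀, (j k - i k) :=
          Finset.sum_congr rfl fun k hk => by
            unfold step; rw [Function.update_of_ne (Finset.ne_of_mem_erase hk)]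
        rw [he]
        have hs : step i k₀ k₀ = i k₀ + 1 := by unfold step; rw [Function.update_self]
        rw [hs]
        omega
    have h2 : lpt A (step i k₀) ≤ lpt A i := by
      rw [lpt_rec hA i]
      exact le_trans (Finset.le_sup (f := fun ℓ => lpt A (step i ℓ)) (Finset.mem_univ k₀))
        (Nat.le_add_left _ _)
    exact le_trans h1 h2

lemma support_lpt {A : (Fin d → ℕ) → ℕ} {ρ : Set (Fin d → ℕ)}
    (hA : Function.support A ⊆ ρ) (hdown : DownClosed ρ) :
    Function.support (lpt A) ⊆ ρ := by
  intro i hi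
  by_contra hiρ
  apply hi
  apply lpt_eq_zero
  intro j hj
  by_contra hAj
  exact hiρ (hdown i j hj (hA hAj))

/-- max of the partition over the forward neighbours. -/
def mx (π : (Fin d → ℕ) → ℕ) (i : Fin d → ℕ) : ℕ := Finset.univ.sup fun ℓ => π (step i ℓ)

/-- corner count function. -/
def cc (π : (Fin d → ℕ) → ℕ) (i : Fin d → ℕ) : ℕ := π i - mx π i

lemma mx_le {π : (Fin d → ℕ) → ℕ} (hπ : IsPartition π) (i : Fin d → ℕ) : mx π i ≤ π i :=
  Finset.sup_le fun ℓ _ => hπ.2 i (step i ℓ) (le_step i ℓ)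

lemma cc_lpt {A : (Fin d → ℕ) → ℕ} (hA : (Function.support A).Finite) : cc (lpt A) = A := by
  funext i
  have h := lpt_rec hA i
  unfold cc mx
  omega

lemma support_cc (π : (Fin d → ℕ) → ℕ) :
    Function.support (cc π) ⊆ Function.support π := by
  intro i h
  rw [Function.mem_support] at h ⊢
  unfold cc at h
  omega

lemma lpt_cc {π : (Fin d → ℕ) → ℕ} (hπ : IsPartition π) : lpt (cc π) = π := by
  classical
  have hccfin : (Function.support (cc π)).Finite := hπ.1.subset (support_cc π)
  obtain ⟨N, hbig⟩ : ∃ N, ∀ i : Fin d → ℕ, N ≤ ∑ k, i k → π i = 0 := by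
    refine ⟨(hπ.1.toFinset.sup fun j => ∑ k, j k) + 1, fun i hi => ?_⟩
    by_contra h
    have hmem : i ∈ hπ.1.toFinset := by rwa [Set.Finite.mem_toFinset, Function.mem_support]
    have h2 : ∑ k, i k ≤ hπ.1.toFinset.sup fun j => ∑ k, j k := Finset.le_sup hmem
    revert hi h2
    generalize (hπ.1.toFinset.sup fun j => ∑ k, j k) = B
    generalize (∑ k, i k) = S
    intro hi h2
    omega
  have base : ∀ i : Fin d → ℕ, N ≤ ∑ k, i k → lpt (cc π) i = π i := by
    intro i hi
    rw [hbig i hi]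
    apply lpt_eq_zero
    intro j hj
    have hsle : ∑ k, i k ≤ ∑ k, j k := Finset.sum_le_sum fun k _ => hj k
    have hz := hbig j (by omega)
    unfold cc
    omega
  have key : ∀ m, ∀ i : Fin d → ℕ, N ≤ (∑ k, i k) + m → lpt (cc π) i = π i := by
    intro m
    induction m with
    | zero => intro i hi; exact base i (by omega)
    | succ m ih =>
      intro i hi
      rw [lpt_rec hccfin i]
      have hsup : (Finset.univ.sup fun ℓ => lpt (cc π) (step i ℓ))
          = Finset.univ.sup fun ℓ => π (step i ℓ) := by
        apply Finset.sup_congr rfl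
        intro ℓ _
        apply ih
        rw [sum_step]
        omega
      rw [hsup]
      have hle := mx_le hπ i
      unfold cc
      unfold mx at hle ⊢
      omega
  funext i
  exact key N i (by omega)

lemma mem_Cor_iff (π : (Fin d → ℕ) → ℕ) (p : (Fin d → ℕ) × ℕ) :
    p ∈ Cor π ↔ p.2 ∈ Finset.Ioc (mx π p.1) (π p.1) := by
  rw [Finset.mem_Ioc]
  constructor
  · rintro ⟨h1, h2, h3⟩
    exact ⟨(Finset.sup_lt_iff (lt_of_lt_of_le (by simp) h1)).mpr fun ℓ _ => h3 ℓ, h2⟩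
  · rintro ⟨h1, h2⟩
    have h0 : 1 ≤ p.2 := by
      have : (0:ℕ) ≤ mx π p.1 := Nat.zero_le _
      omega
    exact ⟨h0, h2, fun ℓ => lt_of_le_of_lt
      (Finset.le_sup (f := fun ℓ => π (step p.1 ℓ)) (Finset.mem_univ ℓ)) h1⟩

lemma finprod_Cor {M : Type*} [CommMonoid M] {π : (Fin d → ℕ) → ℕ} (hπ : IsPartition π)
    {s : Finset (Fin d → ℕ)} (hsupp : Function.support π ⊆ ↑s) (f : (Fin d → ℕ) → M) :
    (∏ᶠ p ∈ Cor π, f p.1) = ∏ i ∈ s, f i ^ cc π i := by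
  classical
  set t : Finset ((Fin d → ℕ) × ℕ) := s.biUnion (fun i =>
    (Finset.Ioc (mx π i) (π i)).map ⟨fun k => (i, k), fun a b h => by
      simpa using congrArg Prod.snd h⟩) with ht
  have hC : Cor π = ↑t := by
    ext p
    rw [mem_Cor_iff]
    constructor
    · intro hp
      have hπp : π p.1 ≠ 0 := by
        have := Finset.mem_Ioc.mp hp; omega
      have hps : p.1 ∈ s := hsupp hπp
      exact Finset.mem_coe.mpr (Finset.mem_biUnion.mpr
        ⟨p.1, hps, Finset.mem_map.mpr ⟨p.2, hp, rfl⟩⟩)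
    · intro hp
      obtain ⟨i, his, hm⟩ := Finset.mem_biUnion.mp (Finset.mem_coe.mp hp)
      obtain ⟨k, hk, hik⟩ := Finset.mem_map.mp hm
      rw [← hik]
      exact hk
  rw [hC, finprod_mem_coe_finset, ht]
  rw [Finset.prod_biUnion (by
    intro a _ b _ hab
    simp only [Function.onFun]
    rw [Finset.disjoint_left]
    intro p hpa hpb
    obtain ⟨k, _, hk⟩ := Finset.mem_map.mp hpa
    obtain ⟨k', _, hk'⟩ := Finset.mem_map.mp hpb
    apply hab
    rw [← hk] at hk'
    exact (congrArg Prod.fst hk').symm)]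
  apply Finset.prod_congr rfl
  intro i _
  rw [Finset.prod_map]
  show ∏ _k ∈ Finset.Ioc (mx π i) (π i), f i = _
  rw [Finset.prod_const, Nat.card_Ioc]
  rfl

/-- The bijection between functions supported in `ρ` and partitions supported in `ρ`. -/
def toPart {ρ : Set (Fin d → ℕ)} (hfin : ρ.Finite) (hdown : DownClosed ρ) :
    {c : (Fin d → ℕ) → ℕ // Function.support c ⊆ ρ} ≃
      {π : (Fin d → ℕ) → ℕ // IsPartition π ∧ Function.support π ⊆ ρ} where
  toFun c := ⟨lpt c.1, ⟨⟨hfin.subset (support_lpt c.2 hdown),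
    fun _ _ h => lpt_le_lpt (hfin.subset c.2) h⟩, support_lpt c.2 hdown⟩⟩
  invFun π := ⟨cc π.1, (support_cc π.1).trans π.2.2⟩
  left_inv c := Subtype.ext (cc_lpt (hfin.subset c.2))
  right_inv π := Subtype.ext (lpt_cc π.2.1)

end HDP

open HDP

/-- The product topology on formal power series (coefficientwise convergence). -/
instance mvPowerSeriesTopology (σ : Type*) : TopologicalSpace (MvPowerSeries σ ℚ) :=
  inferInstanceAs (TopologicalSpace ((σ →₀ ℕ) → ℚ))

namespace CGFAux

open MvPowerSeries

variable {σ ι : Type*}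

instance : T3Space (MvPowerSeries σ ℚ) := inferInstanceAs (T3Space ((σ →₀ ℕ) → ℚ))
instance : T2Space (MvPowerSeries σ ℚ) := inferInstanceAs (T2Space ((σ →₀ ℕ) → ℚ))
instance : ContinuousAdd (MvPowerSeries σ ℚ) :=
  inferInstanceAs (ContinuousAdd ((σ →₀ ℕ) → ℚ))

instance : ContinuousMul (MvPowerSeries σ ℚ) := by
  classical
  constructor
  apply continuous_pi
  intro m
  have h : (fun p : MvPowerSeries σ ℚ × MvPowerSeries σ ℚ => (p.1 * p.2) m)
      = fun p => ∑ x ∈ Finset.HasAntidiagonal.antidiagonal m, p.1 x.1 * p.2 x.2 := by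
    funext p
    exact MvPowerSeries.coeff_mul (n := m) (φ := p.1) (ψ := p.2)
  rw [h]
  exact continuous_finset_sum _ fun x _ =>
    ((continuous_apply x.1).comp continuous_fst).mul ((continuous_apply x.2).comp continuous_snd)

instance : IsTopologicalSemiring (MvPowerSeries σ ℚ) := ⟨⟩

instance : IsTopologicalAddGroup (MvPowerSeries σ ℚ) :=
  inferInstanceAs (IsTopologicalAddGroup ((σ →₀ ℕ) → ℚ))

theorem summable_monomials {ι : Type*} (g : ι → (σ →₀ ℕ)) (b : ι → ℚ)
    (hfin : ∀ m, {i | g i = m}.Finite) :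
    Summable (fun i => (MvPowerSeries.monomial (R := ℚ) (g i) (b i))) := by
  classical
  refine Pi.summable.mpr ?_
  intro m
  apply summable_of_ne_finset_zero (s := (hfin m).toFinset)
  intro i hi
  simp only [Set.Finite.mem_toFinset, Set.mem_setOf_eq] at hi
  show MvPowerSeries.coeff (R := ℚ) m (MvPowerSeries.monomial (R := ℚ) (g i) (b i)) = 0
  rw [MvPowerSeries.coeff_monomial, if_neg (fun h => hi h.symm)]

theorem prod_monomial_one [DecidableEq σ] (s : Finset ι) (g : ι → (σ →₀ ℕ)) :
    (∏ i ∈ s, (monomial (R := ℚ) (g i) 1 : MvPowerSeries σ ℚ)) = monomial (R := ℚ) (∑ i ∈ s, g i) 1 := by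
  classical
  induction s using Finset.induction_on with
  | empty => simp [monomial_zero_one]
  | @insert a s ha ih =>
    rw [Finset.prod_insert ha, Finset.sum_insert ha, ih, monomial_mul_monomial, one_mul]

theorem monomial_one_pow [DecidableEq σ] (m : σ →₀ ℕ) (n : ℕ) :
    ((monomial (R := ℚ) m 1 : MvPowerSeries σ ℚ)) ^ n = monomial (R := ℚ) (n • m) 1 := by
  induction n with
  | zero => simp [monomial_zero_one]
  | succ n ih => rw [pow_succ, ih, monomial_mul_monomial, one_mul, succ_nsmul]

theorem degree_nsmul (n : ℕ) (m : σ →₀ ℕ) :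
    Finsupp.degree (n • m) = n * Finsupp.degree m := by
  have h : ∀ x : σ →₀ ℕ, Finsupp.degree x = Finsupp.weight 1 x := fun x => by
    have := DFunLike.congr_fun (Finsupp.degree_eq_weight_one (R := ℕ) (σ := σ)) x; exact this
  rw [h, h, map_nsmul]
  simp [mul_comm]

theorem degree_add' (a b : σ →₀ ℕ) :
    Finsupp.degree (a + b) = Finsupp.degree a + Finsupp.degree b := by
  have h : ∀ x : σ →₀ ℕ, Finsupp.degree x = Finsupp.weight 1 x := fun x => by
    have := DFunLike.congr_fun (Finsupp.degree_eq_weight_one (R := ℕ) (σ := σ)) x; exact this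
  rw [h, h, h, map_add]

theorem degree_sum' (s : Finset ι) (f : ι → (σ →₀ ℕ)) :
    Finsupp.degree (∑ i ∈ s, f i) = ∑ i ∈ s, Finsupp.degree (f i) := by
  have h : ∀ x : σ →₀ ℕ, Finsupp.degree x = Finsupp.weight 1 x := fun x => by
    have := DFunLike.congr_fun (Finsupp.degree_eq_weight_one (R := ℕ) (σ := σ)) x; exact this
  rw [h, map_sum]
  exact Finset.sum_congr rfl fun i _ => (h (f i)).symm

theorem one_le_degree {m : σ →₀ ℕ} (h : m ≠ 0) : 1 ≤ Finsupp.degree m := by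
  rcases Nat.eq_zero_or_pos (Finsupp.degree m) with h0 | h1
  · exact absurd ((Finsupp.degree_eq_zero_iff m).mp h0) h
  · omega

theorem bounded_finite (s : Finset ι) (B : ℕ) :
    {c : {c : ι → ℕ // Function.support c ⊆ ↑s} | ∀ i, c.1 i ≤ B}.Finite := by
  classical
  have hΦ : Function.Injective
      (fun c : {c : ι → ℕ // Function.support c ⊆ ↑s} => (fun i : ↥s => c.1 i.1)) := by
    intro c c' h
    apply Subtype.ext; funext i
    by_cases hi : i ∈ s
    · exact congrFun h ⟨i, hi⟩
    · have h1 : c.1 i = 0 := by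
        by_contra hc; exact hi (c.2 hc)
      have h2 : c'.1 i = 0 := by
        by_contra hc; exact hi (c'.2 hc)
      rw [h1, h2]
  have hfin : {g : ↥s → ℕ | ∀ i, g i ≤ B}.Finite := by
    apply Set.Finite.subset (Set.Finite.pi (fun _ : ↥s => Set.finite_Iic B))
    exact fun g hg i _ => hg i
  apply Set.Finite.subset (Set.Finite.preimage hΦ.injOn hfin)
  intro c hc i
  exact hc i.1

theorem hasSum_geom [DecidableEq σ] {m : σ →₀ ℕ} (hm : m ≠ 0) :
    HasSum (fun n : ℕ => (monomial (R := ℚ) (n • m) 1 : MvPowerSeries σ ℚ))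
      ((1 - monomial (R := ℚ) m 1)⁻¹) := by
  have hsumm : Summable (fun n : ℕ => (monomial (R := ℚ) (n • m) 1 : MvPowerSeries σ ℚ)) := by
    apply summable_monomials
    intro m'
    apply Set.Finite.subset (Set.finite_Iic (Finsupp.degree m'))
    intro n hn
    simp only [Set.mem_setOf_eq] at hn
    have h1 := degree_nsmul n m
    have h2 := one_le_degree hm
    rw [hn] at h1
    have : n ≤ n * Finsupp.degree m := Nat.le_mul_of_pos_right n (by omega)
    simp only [Set.mem_Iic]
    omega
  obtain ⟨S, hS⟩ := hsumm
  have hconst : MvPowerSeries.constantCoeff (R := ℚ) (1 - monomial (R := ℚ) m 1) ≠ 0 := by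
    rw [map_sub, map_one]
    have : MvPowerSeries.constantCoeff (R := ℚ) (monomial (R := ℚ) m 1) = 0 := by
      show MvPowerSeries.coeff (R := ℚ) 0 (monomial (R := ℚ) m 1) = 0
      rw [MvPowerSeries.coeff_monomial, if_neg (fun h => hm h.symm)]
    rw [this]
    norm_num
  have hmul : (1 - monomial (R := ℚ) m 1) * S = 1 := by
    have h1 : HasSum (fun n : ℕ => (1 - monomial (R := ℚ) m 1) * monomial (R := ℚ) (n • m) 1)
        ((1 - monomial (R := ℚ) m 1) * S) := hS.mul_left _
    have heq : (fun n : ℕ => ((1 - monomial (R := ℚ) m 1) * monomial (R := ℚ) (n • m) 1 : MvPowerSeries σ ℚ))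
        = fun n => monomial (R := ℚ) (n • m) 1 - monomial (R := ℚ) ((n+1) • m) 1 := by
      funext n
      rw [sub_mul, one_mul, monomial_mul_monomial, one_mul, succ_nsmul, add_comm (n • m) m]
    rw [heq] at h1
    have h2 : HasSum (fun n : ℕ => (monomial (R := ℚ) (n • m) 1 - monomial (R := ℚ) ((n+1) • m) 1 :
        MvPowerSeries σ ℚ)) 1 := by
      refine Pi.hasSum.mpr ?_
      intro m'
      set g : ℕ → ℚ := fun n => MvPowerSeries.coeff (R := ℚ) m' (monomial (R := ℚ) (n • m) 1) with hg
      have hvanish : ∀ n, Finsupp.degree m' + 1 ≤ n → g n = 0 := by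
        intro n hn
        show MvPowerSeries.coeff (R := ℚ) m' (monomial (R := ℚ) (n • m) 1) = 0
        rw [MvPowerSeries.coeff_monomial, if_neg]
        intro h
        have h1 := degree_nsmul n m
        have h2 := one_le_degree hm
        rw [h, h1] at hn
        have : n ≤ n * Finsupp.degree m := Nat.le_mul_of_pos_right n (by omega)
        omega
      have hfs : HasSum (fun n => g n - g (n+1))
          (∑ n ∈ Finset.range (Finsupp.degree m' + 1), (g n - g (n+1))) := by
        apply hasSum_sum_of_ne_finset_zero
        intro n hn
        rw [Finset.mem_range] at hn
        rw [hvanish n (by omega), hvanish (n+1) (by omega), sub_zero]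
      rw [Finset.sum_range_sub' g] at hfs
      rw [hvanish _ (le_refl _), sub_zero] at hfs
      have hg0 : g 0 = MvPowerSeries.coeff (R := ℚ) m' (1 : MvPowerSeries σ ℚ) := by
        rw [hg]
        simp only [zero_nsmul, monomial_zero_one]
      rw [hg0] at hfs
      exact hfs
    rw [h1.unique h2]
  have hinv : (1 - monomial (R := ℚ) m 1 : MvPowerSeries σ ℚ)⁻¹ = S := by
    rw [MvPowerSeries.inv_eq_iff_mul_eq_one hconst]
    rw [mul_comm]
    exact hmul
  rw [hinv]
  exact hS

/-- support-splitting equivalence -/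
def suppEquiv [DecidableEq ι] (a : ι) (s : Finset ι) (ha : a ∉ s) :
    {c : ι → ℕ // Function.support c ⊆ ↑(insert a s)} ≃
      ℕ × {c : ι → ℕ // Function.support c ⊆ ↑s} where
  toFun c := (c.1 a, ⟨Function.update c.1 a 0, by
    intro i hi
    rcases eq_or_ne i a with rfl | hne
    · rw [Function.mem_support, Function.update_self] at hi
      exact absurd rfl hi
    · rw [Function.mem_support, Function.update_of_ne hne] at hi
      have h2 := c.2 hi
      simp only [Finset.coe_insert, Set.mem_insert_iff] at h2
      rcases h2 with h2 | h2
      · exact absurd h2 hne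
      · exact h2⟩)
  invFun p := ⟨Function.update p.2.1 a p.1, by
    intro i hi
    rcases eq_or_ne i a with rfl | hne
    · simp
    · rw [Function.mem_support, Function.update_of_ne hne] at hi
      simp only [Finset.coe_insert, Set.mem_insert_iff]
      exact Or.inr (p.2.2 hi)⟩
  left_inv c := by
    apply Subtype.ext; funext i
    rcases eq_or_ne i a with rfl | hne
    · simp
    · simp [Function.update_of_ne hne]
  right_inv p := by
    have hpa : p.2.1 a = 0 := by
      by_contra h
      exact ha (p.2.2 h)
    refine Prod.ext ?_ ?_
    · simp
    · apply Subtype.ext; funext i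
      rcases eq_or_ne i a with rfl | hne
      · simp [hpa]
      · simp [Function.update_of_ne hne]

theorem keyHasSum [DecidableEq ι] [DecidableEq σ] (s : Finset ι) (v : ι → (σ →₀ ℕ))
    (hv : ∀ i ∈ s, v i ≠ 0) :
    HasSum (fun c : {c : ι → ℕ // Function.support c ⊆ ↑s} =>
        (monomial (R := ℚ) (∑ i ∈ s, c.1 i • v i) 1 : MvPowerSeries σ ℚ))
      (∏ i ∈ s, (1 - monomial (R := ℚ) (v i) 1)⁻¹) := by
  classical
  induction s using Finset.induction_on with
  | empty =>
    have hz : ∀ c : {c : ι → ℕ // Function.support c ⊆ ((∅ : Finset ι) : Set ι)},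
        c = ⟨0, by simp⟩ := by
      intro c
      apply Subtype.ext; funext i
      by_contra h
      exact absurd (c.2 h) (by simp)
    have h1 := hasSum_single
      (f := fun c : {c : ι → ℕ // Function.support c ⊆ ((∅ : Finset ι) : Set ι)} =>
        (monomial (R := ℚ) (∑ i ∈ (∅ : Finset ι), c.1 i • v i) 1 : MvPowerSeries σ ℚ))
      ⟨0, by simp⟩ (fun b hb => absurd (hz b) hb)
    simpa [monomial_zero_one] using h1
  | @insert a s ha ih =>
    have hva : v a ≠ 0 := hv a (Finset.mem_insert_self a s)
    have ihs := ih fun i hi => hv i (Finset.mem_insert_of_mem hi)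
    have hprod : HasSum (fun p : ℕ × {c : ι → ℕ // Function.support c ⊆ ↑s} =>
        (monomial (R := ℚ) (p.1 • v a) 1 : MvPowerSeries σ ℚ) *
          monomial (R := ℚ) (∑ i ∈ s, p.2.1 i • v i) 1)
        ((1 - monomial (R := ℚ) (v a) 1)⁻¹ * ∏ i ∈ s, (1 - monomial (R := ℚ) (v i) 1)⁻¹) := by
      apply (hasSum_geom hva).mul ihs
      have heq : (fun p : ℕ × {c : ι → ℕ // Function.support c ⊆ ↑s} =>
          (monomial (R := ℚ) (p.1 • v a) 1 : MvPowerSeries σ ℚ) *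
            monomial (R := ℚ) (∑ i ∈ s, p.2.1 i • v i) 1)
          = fun p => monomial (R := ℚ) (p.1 • v a + ∑ i ∈ s, p.2.1 i • v i) 1 :=
        funext fun p => by rw [monomial_mul_monomial, one_mul]
      rw [heq]
      apply summable_monomials
      intro m
      apply Set.Finite.subset ((Set.finite_Iic (Finsupp.degree m)).prod
        (bounded_finite s (Finsupp.degree m)))
      rintro ⟨n, c⟩ hmem
      simp only [Set.mem_setOf_eq] at hmem
      have hdeg := congrArg Finsupp.degree hmem
      rw [degree_add', degree_nsmul, degree_sum'] at hdeg
      have hva1 := one_le_degree hva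
      constructor
      · show n ≤ Finsupp.degree m
        have : n ≤ n * Finsupp.degree (v a) := Nat.le_mul_of_pos_right n (by omega)
        omega
      · show ∀ i, c.1 i ≤ Finsupp.degree m
        intro i
        by_cases his : i ∈ s
        · have h1 : Finsupp.degree (c.1 i • v i) ≤ ∑ j ∈ s, Finsupp.degree (c.1 j • v j) :=
            Finset.single_le_sum (f := fun j => Finsupp.degree (c.1 j • v j))
              (fun _ _ => Nat.zero_le _) his
          rw [degree_nsmul] at h1
          have h2 := one_le_degree (hv i (Finset.mem_insert_of_mem his))
          have h3 : c.1 i ≤ c.1 i * Finsupp.degree (v i) :=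
            Nat.le_mul_of_pos_right _ (by omega)
          omega
        · have : c.1 i = 0 := by
            by_contra h
            exact his (c.2 h)
          omega
    have h2 := ((suppEquiv a s ha).hasSum_iff).mpr hprod
    have hfe : ((fun p : ℕ × {c : ι → ℕ // Function.support c ⊆ ↑s} =>
        (monomial (R := ℚ) (p.1 • v a) 1 : MvPowerSeries σ ℚ) *
          monomial (R := ℚ) (∑ i ∈ s, p.2.1 i • v i) 1) ∘ (suppEquiv a s ha))
        = fun c : {c : ι → ℕ // Function.support c ⊆ ↑(insert a s)} =>
          (monomial (R := ℚ) (∑ i ∈ insert a s, c.1 i • v i) 1 : MvPowerSeries σ ℚ) := by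
      funext c
      show (monomial (R := ℚ) (c.1 a • v a) 1 : MvPowerSeries σ ℚ) *
          monomial (R := ℚ) (∑ i ∈ s, (Function.update c.1 a 0 : ι → ℕ) i • v i) 1
          = monomial (R := ℚ) (∑ i ∈ insert a s, c.1 i • v i) 1
      have hsum : ∑ i ∈ s, (Function.update c.1 a 0 : ι → ℕ) i • v i
          = ∑ i ∈ s, c.1 i • v i :=
        Finset.sum_congr rfl fun i hi => by
          have hne : i ≠ a := fun h => ha (h ▸ hi)
          rw [Function.update_of_ne hne]
      rw [monomial_mul_monomial, one_mul, hsum, Finset.sum_insert ha]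
    rw [hfe] at h2
    rw [Finset.prod_insert ha]
    exact h2
end CGFAux


open MvPowerSeries in
/-- Multivariate corner generating function over `d`-dimensional partitions with
shape contained in a fixed shape `ρ`.  The variable `x^{(j)}_m` is `X (j, m)`. -/
theorem corner_generating_function_subshape {d : ℕ} (ρ : Set (Fin d → ℕ))
    (hfin : ρ.Finite) (hdown : DownClosed ρ) :
    ∑' π : {π : (Fin d → ℕ) → ℕ // IsPartition π ∧ Function.support π ⊆ ρ},
        ∏ᶠ p ∈ Cor π.1, ∏ j : Fin d, (X (j, p.1 j) : MvPowerSeries (Fin d × ℕ) ℚ)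
      = ∏ i ∈ hfin.toFinset, (1 - ∏ j : Fin d, (X (j, i j) : MvPowerSeries (Fin d × ℕ) ℚ))⁻¹ := by
  classical
  rcases Nat.eq_zero_or_pos d with hd | hd
  · subst hd
    have hx0 : ∀ i : Fin 0 → ℕ,
        (∏ j : Fin 0, (X (j, i j) : MvPowerSeries (Fin 0 × ℕ) ℚ)) = 1 := by
      intro i; simp
    have hterm : ∀ π : {π : (Fin 0 → ℕ) → ℕ // IsPartition π ∧ Function.support π ⊆ ρ},
        (∏ᶠ p ∈ Cor π.1, ∏ j : Fin 0, (X (j, p.1 j) : MvPowerSeries (Fin 0 × ℕ) ℚ)) = 1 := by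
      intro π
      have h1 : (∏ᶠ p ∈ Cor π.1, ∏ j : Fin 0, (X (j, p.1 j) : MvPowerSeries (Fin 0 × ℕ) ℚ))
          = ∏ᶠ p ∈ Cor π.1, (1 : MvPowerSeries (Fin 0 × ℕ) ℚ) :=
        finprod_mem_congr rfl (fun p _ => hx0 p.1)
      rw [h1, finprod_mem_one]
    rw [tsum_congr hterm]
    rcases Set.eq_empty_or_nonempty ρ with rfl | hne
    · have htf : hfin.toFinset = ∅ := Set.Finite.toFinset_eq_empty.mpr rfl
      rw [htf, Finset.prod_empty]
      set π₀ : {π : (Fin 0 → ℕ) → ℕ // IsPartition π ∧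
          Function.support π ⊆ (∅ : Set (Fin 0 → ℕ))} :=
        ⟨0, ⟨⟨by simp, fun i j _ => le_refl _⟩, by simp⟩⟩ with hπ₀
      have hu : ∀ π : {π : (Fin 0 → ℕ) → ℕ // IsPartition π ∧
          Function.support π ⊆ (∅ : Set (Fin 0 → ℕ))}, π = π₀ := by
        intro π
        apply Subtype.ext; funext i
        by_contra h
        exact absurd (π.2.2 h) (Set.notMem_empty i)
      have hs := hasSum_single (f := fun _ : {π : (Fin 0 → ℕ) → ℕ // IsPartition π ∧
          Function.support π ⊆ (∅ : Set (Fin 0 → ℕ))} =>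
        (1 : MvPowerSeries (Fin 0 × ℕ) ℚ)) π₀ (fun b hb => absurd (hu b) hb)
      exact hs.tsum_eq
    · obtain ⟨i₀, hi₀⟩ := hne
      have hmem : i₀ ∈ hfin.toFinset := hfin.mem_toFinset.mpr hi₀
      rw [Finset.prod_eq_zero hmem (by rw [hx0, sub_self, MvPowerSeries.zero_inv])]
      have hρu : ρ = Set.univ :=
        Set.eq_univ_iff_forall.mpr fun x => (Subsingleton.elim x i₀) ▸ hi₀
      haveI hinf : Infinite {π : (Fin 0 → ℕ) → ℕ // IsPartition π ∧
          Function.support π ⊆ ρ} := by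
        apply Infinite.of_injective (fun n : ℕ =>
          (⟨fun _ => n, ⟨⟨Set.toFinite _, fun i j _ => le_refl _⟩,
            by rw [hρu]; exact Set.subset_univ _⟩⟩ :
            {π : (Fin 0 → ℕ) → ℕ // IsPartition π ∧ Function.support π ⊆ ρ}))
        intro n m h
        exact congrFun (congrArg Subtype.val h) (fun x => 0)
      apply tsum_eq_zero_of_not_summable
      intro hs
      have h0 := hs.tendsto_cofinite_zero
      have h1 : Filter.Tendsto (fun _ : {π : (Fin 0 → ℕ) → ℕ // IsPartition π ∧
          Function.support π ⊆ ρ} => (1 : MvPowerSeries (Fin 0 × ℕ) ℚ))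
          Filter.cofinite (nhds 1) := tendsto_const_nhds
      exact one_ne_zero (tendsto_nhds_unique h1 h0)
  · set s := hfin.toFinset with hsdef
    have hcoe : (↑s : Set (Fin d → ℕ)) = ρ := hfin.coe_toFinset
    set D : (Fin d → ℕ) → ((Fin d × ℕ) →₀ ℕ) :=
      fun i => ∑ j, Finsupp.single (j, i j) 1 with hD
    have hx : ∀ i : Fin d → ℕ, (∏ j, (X (j, i j) : MvPowerSeries (Fin d × ℕ) ℚ))
        = monomial (R := ℚ) (D i) 1 := by
      intro i
      have h1 : ∀ j : Fin d, (X (j, i j) : MvPowerSeries (Fin d × ℕ) ℚ)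
          = monomial (R := ℚ) (Finsupp.single (j, i j) 1) 1 := fun j => X_def _
      rw [Finset.prod_congr rfl (fun j _ => h1 j), CGFAux.prod_monomial_one]
    have hDne : ∀ i, D i ≠ 0 := by
      intro i h
      obtain ⟨j⟩ : Nonempty (Fin d) := ⟨⟨0, hd⟩⟩
      have hval : (D i) (j, i j) = 1 := by
        rw [hD]
        rw [Finset.sum_apply']
        rw [Finset.sum_eq_single j]
        · rw [Finsupp.single_eq_same]
        · intro b _ hb
          rw [Finsupp.single_apply, if_neg]
          intro hc
          simp only [Prod.mk.injEq] at hc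
          exact hb hc.1
        · intro habs; exact absurd (Finset.mem_univ j) habs
      rw [h] at hval
      simp at hval
    have hterm : ∀ π : {π : (Fin d → ℕ) → ℕ // IsPartition π ∧ Function.support π ⊆ ρ},
        (∏ᶠ p ∈ Cor π.1, ∏ j : Fin d, (X (j, p.1 j) : MvPowerSeries (Fin d × ℕ) ℚ))
          = monomial (R := ℚ) (∑ i ∈ s, cc π.1 i • D i) 1 := by
      intro π
      have h1 : (∏ᶠ p ∈ Cor π.1, ∏ j : Fin d, (X (j, p.1 j) : MvPowerSeries (Fin d × ℕ) ℚ))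
          = ∏ i ∈ s, (∏ j : Fin d, (X (j, i j) : MvPowerSeries (Fin d × ℕ) ℚ)) ^ cc π.1 i :=
        finprod_Cor π.2.1 (by rw [hcoe]; exact π.2.2)
          (fun i => ∏ j : Fin d, (X (j, i j) : MvPowerSeries (Fin d × ℕ) ℚ))
      rw [h1]
      rw [Finset.prod_congr rfl (fun i _ => by rw [hx i, CGFAux.monomial_one_pow])]
      rw [CGFAux.prod_monomial_one]
    rw [tsum_congr hterm]
    have hR : (∏ i ∈ s, (1 - ∏ j, (X (j, i j) : MvPowerSeries (Fin d × ℕ) ℚ))⁻¹)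
        = ∏ i ∈ s, (1 - monomial (R := ℚ) (D i) 1)⁻¹ :=
      Finset.prod_congr rfl fun i _ => by rw [hx i]
    rw [hR]
    have hkey := CGFAux.keyHasSum s D (fun i _ => hDne i)
    rw [hcoe] at hkey
    have hge : ((fun π : {π : (Fin d → ℕ) → ℕ // IsPartition π ∧ Function.support π ⊆ ρ} =>
        (monomial (R := ℚ) (∑ i ∈ s, cc π.1 i • D i) 1 : MvPowerSeries (Fin d × ℕ) ℚ))
          ∘ (toPart hfin hdown))
        = fun c : {c : (Fin d → ℕ) → ℕ // Function.support c ⊆ ρ} =>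
          monomial (R := ℚ) (∑ i ∈ s, c.1 i • D i) 1 := by
      funext c
      show (monomial (R := ℚ) (∑ i ∈ s, cc (lpt c.1) i • D i) 1 : MvPowerSeries (Fin d × ℕ) ℚ) = _
      rw [cc_lpt (hfin.subset c.2)]
    rw [← hge] at hkey
    exact (((toPart hfin hdown).hasSum_iff).mp hkey).tsum_eq
end
end

section
/- Let ρ ⊂ (ℤ₊)^d be a fixed shape. Then Σ_{π : shape(π) ⊆ ρ} t^{cor(π)} q^{|π|_{ch}} = ∏_{(i₁,...,i_d) ∈ ρ} (1 − t·q^{i₁+···+i_d−d+1})^{−1}, as formal power series in t, q. -/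
open scoped BigOperators

noncomputable section

open HDP

section AuxAlgebra
open MvPowerSeries

instance : T2Space (MvPowerSeries (Fin 2) ℚ) :=
  inferInstanceAs (T2Space ((Fin 2 →₀ ℕ) → ℚ))

instance : T3Space (MvPowerSeries (Fin 2) ℚ) :=
  inferInstanceAs (T3Space ((Fin 2 →₀ ℕ) → ℚ))

instance : ContinuousAdd (MvPowerSeries (Fin 2) ℚ) :=
  inferInstanceAs (ContinuousAdd ((Fin 2 →₀ ℕ) → ℚ))

instance : ContinuousMul (MvPowerSeries (Fin 2) ℚ) := by
  constructor
  apply continuous_pi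
  intro μ
  have : (fun p : MvPowerSeries (Fin 2) ℚ × MvPowerSeries (Fin 2) ℚ => (p.1 * p.2) μ)
      = fun p => ∑ x ∈ Finset.HasAntidiagonal.antidiagonal μ, p.1 x.1 * p.2 x.2 := by
    funext p; exact MvPowerSeries.coeff_mul μ p.1 p.2
  rw [this]
  exact continuous_finset_sum _ fun x _ =>
    ((continuous_apply x.1).comp continuous_fst).mul ((continuous_apply x.2).comp continuous_snd)

instance : IsTopologicalSemiring (MvPowerSeries (Fin 2) ℚ) := ⟨⟩

-- test Pi.hasSum transfer
example (f : ℕ → MvPowerSeries (Fin 2) ℚ) (g : MvPowerSeries (Fin 2) ℚ) :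
    HasSum f g ↔ ∀ μ, HasSum (fun n => f n μ) (g μ) := Pi.hasSum


open MvPowerSeries

def geo (b : Fin 2 →₀ ℕ) : MvPowerSeries (Fin 2) ℚ :=
  fun μ => if μ = (μ 0) • b then 1 else 0

theorem coeff_geo (b μ) : (MvPowerSeries.coeff μ) (geo b) = if μ = (μ 0) • b then 1 else 0 := rfl

theorem geo_mul (b : Fin 2 →₀ ℕ) (hb : b 0 = 1) :
    (1 - monomial b 1) * geo b = 1 := by
  have hbne : b ≠ 0 := fun h => by simp [h] at hb
  have hsmul : ∀ k : ℕ, (k • b) 0 = k := by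
    intro k; rw [Finsupp.smul_apply, hb, smul_eq_mul, mul_one]
  ext μ
  rw [sub_mul, one_mul, map_sub, coeff_geo, coeff_monomial_mul, coeff_one]
  by_cases h0 : μ = 0
  · subst h0
    have : ¬ b ≤ (0 : Fin 2 →₀ ℕ) := fun h => hbne (le_antisymm h zero_le)
    simp [this]
  · rw [if_neg h0]
    by_cases hA : μ = (μ 0) • b
    · have hμ0 : 1 ≤ μ 0 := by
        rcases Nat.eq_zero_or_pos (μ 0) with h|h
        · exact absurd (by rw [hA, h, zero_smul]) h0
        · exact h
      obtain ⟨m, hm⟩ := Nat.exists_eq_add_of_le hμ0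
      have hμ : μ = (m + 1) • b := by rw [hA, hm, add_comm]
      have hble : b ≤ μ := by
        rw [hμ, succ_nsmul]; exact le_add_self
      have hsub : μ - b = m • b := by rw [hμ, succ_nsmul, add_tsub_cancel_right]
      rw [if_pos hA, if_pos hble, one_mul, hsub, coeff_geo, hsmul, if_pos rfl, sub_self]
    · rw [if_neg hA]
      by_cases hble : b ≤ μ
      · have hne : ¬ (μ - b) = ((μ - b) 0) • b := by
          intro hcon
          apply hA
          have hμeq : μ = (μ - b) + b := (tsub_add_cancel_of_le hble).symm
          have hμ0 : μ 0 = (μ - b) 0 + 1 := by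
            conv_lhs => rw [hμeq]
            rw [Finsupp.add_apply, hb]
          rw [hμ0, add_smul, one_smul]
          conv_lhs => rw [hμeq, hcon]
        rw [if_pos hble, one_mul, coeff_geo, if_neg hne, sub_zero]
      · rw [if_neg hble, sub_zero]

theorem geo_eq_inv (b : Fin 2 →₀ ℕ) (hb : b 0 = 1) :
    geo b = (1 - monomial b 1)⁻¹ := by
  have hbne : b ≠ 0 := fun h => by simp [h] at hb
  rw [MvPowerSeries.eq_inv_iff_mul_eq_one, mul_comm]
  · exact geo_mul b hb
  · rw [map_sub, constantCoeff_one]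
    have : constantCoeff (monomial (R := ℚ) b 1) = 0 := by
      rw [← coeff_zero_eq_constantCoeff, coeff_monomial, if_neg (fun h => hbne h.symm)]
    rw [this, sub_zero]
    exact one_ne_zero

theorem hasSum_geo (b : Fin 2 →₀ ℕ) (hb : b 0 = 1) :
    HasSum (fun k : ℕ => monomial (k • b) (1 : ℚ)) ((1 - monomial b 1)⁻¹) := by
  rw [← geo_eq_inv b hb]
  have hsmul : ∀ k : ℕ, (k • b) 0 = k := by
    intro k; rw [Finsupp.smul_apply, hb, smul_eq_mul, mul_one]
  apply Pi.hasSum.mpr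
  intro μ
  have hcoeff : ∀ k : ℕ, (monomial (k • b) (1 : ℚ)) μ = if k = μ 0 then (geo b) μ else 0 := by
    intro k
    have h1 : (monomial (k • b) (1 : ℚ)) μ = if μ = k • b then (1:ℚ) else 0 :=
      MvPowerSeries.coeff_monomial μ (k • b) 1
    have h2 : (geo b) μ = if μ = (μ 0) • b then (1:ℚ) else 0 := coeff_geo b μ
    rw [h1, h2]
    by_cases hk : k = μ 0
    · rw [hk]; simp
    · rw [if_neg hk, if_neg]
      intro hcon
      apply hk
      rw [hcon, hsmul]
  have hfun : (fun k : ℕ => (monomial (k • b) (1:ℚ)) μ) = fun k => if k = μ 0 then (geo b) μ else 0 :=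
    funext hcoeff
  show HasSum (fun k : ℕ => (monomial (k • b) (1:ℚ)) μ) ((geo b) μ)
  rw [hfun]
  have := hasSum_single (f := fun k : ℕ => if k = μ 0 then (geo b) μ else 0) (μ 0)
    (fun k hk => if_neg hk)
  simpa using this

theorem summable_monomial {κ : Type*} (w : κ → (Fin 2 →₀ ℕ))
    (hw : ∀ μ, {x | w x = μ}.Finite) :
    Summable (fun x => monomial (w x) (1 : ℚ)) := by
  apply Pi.summable.mpr
  intro μ
  apply summable_of_ne_finset_zero (s := (hw μ).toFinset)
  intro x hx
  have hne : ¬ μ = w x := fun h => hx ((hw μ).mem_toFinset.mpr h.symm)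
  exact (MvPowerSeries.coeff_monomial μ (w x) 1).trans (if_neg hne)

theorem fiber_finite {ι : Type*} (s : Finset ι) (b : ι → (Fin 2 →₀ ℕ))
    (hb : ∀ i, b i 0 = 1) (μ : Fin 2 →₀ ℕ) :
    {f : {f : ι → ℕ // ∀ i ∉ s, f i = 0} | (∑ i ∈ s, f.1 i • b i) = μ}.Finite := by
  classical
  have key : ∀ f : {f : ι → ℕ // ∀ i ∉ s, f i = 0}, (∑ i ∈ s, f.1 i • b i) = μ →
      ∀ i, f.1 i ≤ μ 0 := by
    intro f hf i
    by_cases hi : i ∈ s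
    · have h0 : (∑ i ∈ s, f.1 i • b i) 0 = ∑ i ∈ s, f.1 i := by
        rw [Finsupp.finset_sum_apply]
        exact Finset.sum_congr rfl fun i _ => by
          rw [Finsupp.smul_apply, hb, smul_eq_mul, mul_one]
      have hsum : ∑ i ∈ s, f.1 i = μ 0 := by rw [← h0, hf]
      calc f.1 i ≤ ∑ i ∈ s, f.1 i := Finset.single_le_sum (fun _ _ => Nat.zero_le _) hi
      _ = μ 0 := hsum
    · rw [f.2 i hi]; exact Nat.zero_le _
  have hfin2 : {g : ι → ℕ | (∀ i ∉ s, g i = 0) ∧ ∀ i, g i ≤ μ 0}.Finite := by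
    apply Set.Finite.subset (Set.Finite.image
      (fun p : (∀ i ∈ s, ℕ) => fun i => if h : i ∈ s then p i h else 0)
      (Finset.finite_toSet (s.pi fun _ => Finset.range (μ 0 + 1))))
    rintro g ⟨hg0, hgle⟩
    refine ⟨fun i _ => g i, ?_, ?_⟩
    · rw [Finset.mem_coe, Finset.mem_pi]
      intro i _
      rw [Finset.mem_range]
      exact Nat.lt_succ_of_le (hgle i)
    · funext i
      by_cases hi : i ∈ s
      · simp [hi]
      · simp [hi, hg0 i hi]
  have hpre : {f : {f : ι → ℕ // ∀ i ∉ s, f i = 0} | (∑ i ∈ s, f.1 i • b i) = μ}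
      ⊆ Subtype.val ⁻¹' {g : ι → ℕ | (∀ i ∉ s, g i = 0) ∧ ∀ i, g i ≤ μ 0} :=
    fun f hf => ⟨f.2, key f hf⟩
  exact Set.Finite.subset (hfin2.preimage (Set.injOn_of_injective Subtype.val_injective)) hpre

variable {ι : Type*} [DecidableEq ι]

def insertEquiv (c : ι) (s : Finset ι) (hc : c ∉ s) :
    {f : ι → ℕ // ∀ i ∉ insert c s, f i = 0} ≃ ℕ × {f : ι → ℕ // ∀ i ∉ s, f i = 0} where
  toFun f := (f.1 c, ⟨Function.update f.1 c 0, fun i hi => by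
    rcases eq_or_ne i c with rfl|h
    · simp
    · rw [Function.update_of_ne h]
      exact f.2 i (fun hmem => by
        rcases Finset.mem_insert.mp hmem with h'|h'
        · exact h h'
        · exact hi h')⟩)
  invFun p := ⟨Function.update p.2.1 c p.1, fun i hi => by
    have h : i ≠ c := fun he => hi (he ▸ Finset.mem_insert_self c s)
    rw [Function.update_of_ne h]
    exact p.2.2 i (fun his => hi (Finset.mem_insert_of_mem his))⟩
  left_inv f := by
    apply Subtype.ext
    funext i
    rcases eq_or_ne i c with rfl|h
    · simp
    · simp [Function.update_of_ne h]
  right_inv p := by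
    refine Prod.ext ?_ (Subtype.ext ?_)
    · simp
    · funext i
      rcases eq_or_ne i c with rfl|h
      · simp only [Function.update_self]
        exact (p.2.2 _ hc).symm
      · simp [Function.update_of_ne h]

theorem insertEquiv_sum (b : ι → (Fin 2 →₀ ℕ)) (c : ι) (s : Finset ι) (hc : c ∉ s)
    (x : ℕ × {f : ι → ℕ // ∀ i ∉ s, f i = 0}) :
    ∑ i ∈ insert c s, ((insertEquiv c s hc).symm x).1 i • b i
      = x.1 • b c + ∑ i ∈ s, x.2.1 i • b i := by
  rw [Finset.sum_insert hc]
  congr 1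
  · show (Function.update x.2.1 c x.1 c) • b c = x.1 • b c
    rw [Function.update_self]
  · apply Finset.sum_congr rfl
    intro i hi
    show (Function.update x.2.1 c x.1 i) • b i = x.2.1 i • b i
    rw [Function.update_of_ne (ne_of_mem_of_not_mem hi hc)]

theorem key_hasSum (b : ι → (Fin 2 →₀ ℕ)) (hb : ∀ i, b i 0 = 1) (s : Finset ι) :
    HasSum (fun f : {f : ι → ℕ // ∀ i ∉ s, f i = 0} =>
        monomial (∑ i ∈ s, f.1 i • b i) (1 : ℚ))
      (∏ i ∈ s, (1 - monomial (b i) (1 : ℚ))⁻¹) := by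
  induction s using Finset.induction_on with
  | empty =>
      have h0 : HasSum (fun f : {f : ι → ℕ // ∀ i ∉ (∅ : Finset ι), f i = 0} =>
          monomial (∑ i ∈ (∅ : Finset ι), f.1 i • b i) (1 : ℚ))
          (monomial (∑ i ∈ (∅ : Finset ι),
            ((⟨fun _ => 0, fun i _ => rfl⟩ :
              {f : ι → ℕ // ∀ i ∉ (∅ : Finset ι), f i = 0}).1 i) • b i) (1 : ℚ)) :=
        hasSum_single _ (fun f' hf' =>
          absurd (Subtype.ext (funext fun i => f'.2 i (Finset.notMem_empty i))) hf')
      simpa [MvPowerSeries.monomial_zero_one] using h0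
  | @insert c s hc ih =>
      have hfuneq : (fun x : ℕ × {f : ι → ℕ // ∀ i ∉ s, f i = 0} =>
            monomial (x.1 • b c) (1 : ℚ) * monomial (∑ i ∈ s, x.2.1 i • b i) (1 : ℚ))
          = fun x => monomial (x.1 • b c + ∑ i ∈ s, x.2.1 i • b i) (1 : ℚ) := by
        funext x
        rw [MvPowerSeries.monomial_mul_monomial, one_mul]
      have hsummable : Summable (fun x : ℕ × {f : ι → ℕ // ∀ i ∉ s, f i = 0} =>
          monomial (x.1 • b c) (1 : ℚ) * monomial (∑ i ∈ s, x.2.1 i • b i) (1 : ℚ)) := by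
        rw [hfuneq]
        apply summable_monomial
        intro μ
        have hset : {x : ℕ × {f : ι → ℕ // ∀ i ∉ s, f i = 0} |
              x.1 • b c + ∑ i ∈ s, x.2.1 i • b i = μ}
            = (insertEquiv c s hc).symm ⁻¹'
              {f : {f : ι → ℕ // ∀ i ∉ insert c s, f i = 0} |
                (∑ i ∈ insert c s, f.1 i • b i) = μ} := by
          ext x
          simp only [Set.mem_setOf_eq, Set.mem_preimage, insertEquiv_sum b c s hc x]
        rw [hset]
        exact (fiber_finite (insert c s) b hb μ).preimage
          (Equiv.injective _).injOn
      have hmul := (hasSum_geo (b c) (hb c)).mul ih hsummable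
      rw [Finset.prod_insert hc]
      have heq : (fun f : {f : ι → ℕ // ∀ i ∉ insert c s, f i = 0} =>
            monomial (∑ i ∈ insert c s, f.1 i • b i) (1 : ℚ))
          = (fun x : ℕ × {f : ι → ℕ // ∀ i ∉ s, f i = 0} =>
              monomial (x.1 • b c) (1 : ℚ) * monomial (∑ i ∈ s, x.2.1 i • b i) (1 : ℚ))
            ∘ (insertEquiv c s hc) := by
        funext f
        have h1 := insertEquiv_sum b c s hc ((insertEquiv c s hc) f)
        rw [Equiv.symm_apply_apply] at h1
        simp only [Function.comp_apply, MvPowerSeries.monomial_mul_monomial, one_mul, h1]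
      rw [heq]
      exact (Equiv.hasSum_iff (insertEquiv c s hc)).mpr hmul

end AuxAlgebra

namespace HDPAux
open HDP

variable {d : ℕ}

theorem le_step (i : Fin d → ℕ) (ℓ : Fin d) : ∀ k, i k ≤ step i ℓ k := by
  intro k
  unfold step
  rcases eq_or_ne k ℓ with rfl|h
  · rw [Function.update_self]; omega
  · rw [Function.update_of_ne h]

theorem sum_step (i : Fin d → ℕ) (ℓ : Fin d) : ∑ j, step i ℓ j = (∑ j, i j) + 1 := by
  unfold step
  rw [Finset.sum_update_of_mem (Finset.mem_univ ℓ),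
    ← Finset.sum_erase_add Finset.univ i (Finset.mem_univ ℓ),
    Finset.sdiff_singleton_eq_erase]
  omega

theorem antitone_of_step (g : (Fin d → ℕ) → ℕ) (hg : ∀ i ℓ, g (step i ℓ) ≤ g i) :
    ∀ i j : Fin d → ℕ, (∀ k, i k ≤ j k) → g j ≤ g i := by
  have aux : ∀ n (i j : Fin d → ℕ), (∀ k, i k ≤ j k) → (∑ k, j k) ≤ (∑ k, i k) + n →
      g j ≤ g i := by
    intro n
    induction n with
    | zero =>
        intro i j hij hsum
        have : i = j := by
          funext k
          by_contra hne
          have h1 : i k < j k := lt_of_le_of_ne (hij k) hne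
          have h2 : ∑ k, i k < ∑ k, j k :=
            Finset.sum_lt_sum (fun m _ => hij m) ⟨k, Finset.mem_univ k, h1⟩
          omega
        rw [this]
    | succ n IH =>
        intro i j hij hsum
        by_cases hij' : i = j
        · rw [hij']
        · have hk : ∃ k, i k < j k := by
            by_contra hco
            push_neg at hco
            exact hij' (funext fun k => le_antisymm (hij k) (hco k))
          obtain ⟨k, hk⟩ := hk
          set j' := Function.update j k (j k - 1) with hj'
          have hstep : step j' k = j := by
            funext m
            unfold step
            rcases eq_or_ne m k with rfl|h
            · rw [Function.update_self, hj', Function.update_self]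
              omega
            · rw [Function.update_of_ne h, hj', Function.update_of_ne h]
          have hij2 : ∀ m, i m ≤ j' m := by
            intro m
            rcases eq_or_ne m k with rfl|h
            · rw [hj', Function.update_self]; omega
            · rw [hj', Function.update_of_ne h]; exact hij m
          have hjk : j k ≤ ∑ m, j m :=
            Finset.single_le_sum (fun m _ => Nat.zero_le (j m)) (Finset.mem_univ k)
          have hsum' : ∑ m, j' m = (∑ m, j m) - 1 := by
            rw [hj', Finset.sum_update_of_mem (Finset.mem_univ k),
              ← Finset.sum_erase_add Finset.univ j (Finset.mem_univ k),
              Finset.sdiff_singleton_eq_erase]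
            omega
          calc g j = g (step j' k) := by rw [hstep]
          _ ≤ g j' := hg j' k
          _ ≤ g i := IH i j' hij2 (by omega)
  intro i j hij
  exact aux (∑ k, j k) i j hij (by omega)

/-- The degree bound of a finite shape. -/
def bnd (ρF : Finset (Fin d → ℕ)) : ℕ := (ρF.sup fun i => ∑ j, i j) + 1

theorem lt_bnd {ρF : Finset (Fin d → ℕ)} {i : Fin d → ℕ} (h : i ∈ ρF) :
    ∑ j, i j < bnd ρF := Nat.lt_succ_of_le (Finset.le_sup h)

/-- Build a partition from its corner-multiplicity array by last-passage recursion. -/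
def build (ρF : Finset (Fin d → ℕ)) (f : (Fin d → ℕ) → ℕ) (i : Fin d → ℕ) : ℕ :=
  if h : i ∈ ρF then
    f i + Finset.univ.sup (fun ℓ => build ρF f (step i ℓ))
  else 0
termination_by bnd ρF - ∑ j, i j
decreasing_by
  have h1 : ∑ j, i j < bnd ρF := lt_bnd h
  have h2 := sum_step i ℓ
  omega

theorem build_of_not_mem {ρF : Finset (Fin d → ℕ)} {f} {i : Fin d → ℕ} (h : i ∉ ρF) :
    build ρF f i = 0 := by
  rw [build]
  simp [h]

theorem build_of_mem {ρF : Finset (Fin d → ℕ)} {f} {i : Fin d → ℕ} (h : i ∈ ρF) :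
    build ρF f i = f i + Finset.univ.sup (fun ℓ => build ρF f (step i ℓ)) := by
  rw [build]
  simp [h]

theorem build_step_le {ρF : Finset (Fin d → ℕ)} {f}
    (hdc : ∀ i ℓ, step i ℓ ∈ ρF → i ∈ ρF) (i : Fin d → ℕ) (ℓ : Fin d) :
    build ρF f (step i ℓ) ≤ build ρF f i := by
  by_cases h : i ∈ ρF
  · rw [build_of_mem h]
    calc build ρF f (step i ℓ) ≤ Finset.univ.sup (fun ℓ => build ρF f (step i ℓ)) :=
        Finset.le_sup (f := fun ℓ => build ρF f (step i ℓ)) (Finset.mem_univ ℓ)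
    _ ≤ _ := Nat.le_add_left _ _
  · rw [build_of_not_mem (fun hs => h (hdc i ℓ hs)), build_of_not_mem h]

theorem build_isPartition {ρF : Finset (Fin d → ℕ)} {f}
    (hdc : ∀ i ℓ, step i ℓ ∈ ρF → i ∈ ρF) : IsPartition (build ρF f) := by
  constructor
  · apply Set.Finite.subset ρF.finite_toSet
    intro i hi
    by_contra h
    exact hi (build_of_not_mem h)
  · intro i j hij
    exact antitone_of_step _ (build_step_le hdc) i j hij

theorem build_support {ρF : Finset (Fin d → ℕ)} {f} :
    ∀ i, i ∉ ρF → build ρF f i = 0 := fun _ h => build_of_not_mem h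

/-- Maximum of the neighbours above. -/
def nmax (π : (Fin d → ℕ) → ℕ) (i : Fin d → ℕ) : ℕ :=
  Finset.univ.sup fun ℓ => π (step i ℓ)

/-- The corner-multiplicity array of a partition. -/
def acell (π : (Fin d → ℕ) → ℕ) (i : Fin d → ℕ) : ℕ := π i - nmax π i

theorem nmax_le {π : (Fin d → ℕ) → ℕ} (hπ : IsPartition π) (i : Fin d → ℕ) :
    nmax π i ≤ π i :=
  Finset.sup_le fun ℓ _ => hπ.2 i (step i ℓ) (le_step i ℓ)

theorem acell_build {ρF : Finset (Fin d → ℕ)} {f} {i : Fin d → ℕ} (h : i ∈ ρF) :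
    acell (build ρF f) i = f i := by
  rw [acell, nmax, build_of_mem h]
  omega

theorem acell_build_of_not_mem {ρF : Finset (Fin d → ℕ)} {f} {i : Fin d → ℕ} (h : i ∉ ρF) :
    acell (build ρF f) i = 0 := by
  rw [acell, build_of_not_mem h]
  exact Nat.zero_sub _

theorem build_acell {ρF : Finset (Fin d → ℕ)} {π : (Fin d → ℕ) → ℕ}
    (hdc : ∀ i ℓ, step i ℓ ∈ ρF → i ∈ ρF) (hπ : IsPartition π)
    (hsupp : ∀ i, i ∉ ρF → π i = 0) :
    build ρF (acell π) = π := by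
  have aux : ∀ n (i : Fin d → ℕ), bnd ρF ≤ (∑ j, i j) + n → build ρF (acell π) i = π i := by
    intro n
    induction n with
    | zero =>
        intro i hin
        have hi : i ∉ ρF := fun h => by have := lt_bnd h; omega
        rw [build_of_not_mem hi, hsupp i hi]
    | succ n IH =>
        intro i hin
        by_cases hi : i ∈ ρF
        · rw [build_of_mem hi]
          have hsup : Finset.univ.sup (fun ℓ => build ρF (acell π) (step i ℓ))
              = nmax π i := by
            rw [nmax]
            apply Finset.sup_congr rfl
            intro ℓ _
            apply IH
            rw [sum_step]
            omega
          rw [hsup, acell]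
          exact Nat.sub_add_cancel (nmax_le hπ i)
        · rw [build_of_not_mem hi, hsupp i hi]
  funext i
  exact aux (bnd ρF) i (by omega)

/-- The corner finset of a partition supported in `ρF`. -/
def corF (ρF : Finset (Fin d → ℕ)) (π : (Fin d → ℕ) → ℕ) : Finset ((Fin d → ℕ) × ℕ) :=
  ρF.biUnion fun i => {i} ×ˢ Finset.Ioc (nmax π i) (π i)

theorem mem_corF {ρF : Finset (Fin d → ℕ)} {π} {p : (Fin d → ℕ) × ℕ} :
    p ∈ corF ρF π ↔ p.1 ∈ ρF ∧ nmax π p.1 < p.2 ∧ p.2 ≤ π p.1 := by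
  constructor
  · intro hp
    obtain ⟨i, hi, hmem⟩ := Finset.mem_biUnion.mp hp
    rw [Finset.mem_product, Finset.mem_singleton] at hmem
    obtain ⟨h1, h2⟩ := hmem
    rw [Finset.mem_Ioc] at h2
    exact h1 ▸ ⟨hi, h2.1, h2.2⟩
  · rintro ⟨h1, h2, h3⟩
    apply Finset.mem_biUnion.mpr
    exact ⟨p.1, h1, Finset.mem_product.mpr ⟨Finset.mem_singleton_self _,
      Finset.mem_Ioc.mpr ⟨h2, h3⟩⟩⟩

theorem cor_set_eq {ρF : Finset (Fin d → ℕ)} {π : (Fin d → ℕ) → ℕ}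
    (hsupp : ∀ i, i ∉ ρF → π i = 0) :
    Cor π = ↑(corF ρF π) := by
  ext p
  obtain ⟨i, k⟩ := p
  rw [Finset.mem_coe]
  show (1 ≤ k ∧ k ≤ π i ∧ ∀ ℓ, π (step i ℓ) < k) ↔ _
  rw [mem_corF]
  constructor
  · rintro ⟨h1, h2, h3⟩
    have hiρ : i ∈ ρF := by
      by_contra hi
      have := hsupp i hi
      omega
    refine ⟨hiρ, ?_, h2⟩
    rw [nmax]
    exact Finset.sup_lt_iff (show (⊥ : ℕ) < k from h1) |>.mpr fun ℓ _ => h3 ℓ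
  · rintro ⟨h1, h2, h3⟩
    have h0 : 1 ≤ k := Nat.one_le_iff_ne_zero.mpr (by omega)
    exact ⟨h0, h3, fun ℓ =>
      lt_of_le_of_lt (Finset.le_sup (f := fun ℓ => π (step i ℓ)) (Finset.mem_univ ℓ)) h2⟩

theorem corF_disjoint {ρF : Finset (Fin d → ℕ)} {π : (Fin d → ℕ) → ℕ} :
    ∀ x ∈ ρF, ∀ y ∈ ρF, x ≠ y →
      Disjoint ({x} ×ˢ Finset.Ioc (nmax π x) (π x)) ({y} ×ˢ Finset.Ioc (nmax π y) (π y)) := by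
  intro x _ y _ hxy
  rw [Finset.disjoint_left]
  intro p hp hq
  rw [Finset.mem_product, Finset.mem_singleton] at hp hq
  exact hxy (hp.1 ▸ hq.1 ▸ rfl)

theorem cor_eq_sum {ρF : Finset (Fin d → ℕ)} {π : (Fin d → ℕ) → ℕ}
    (hsupp : ∀ i, i ∉ ρF → π i = 0) :
    cor π = ∑ i ∈ ρF, acell π i := by
  rw [cor, cor_set_eq hsupp, Nat.card_coe_set_eq, Set.ncard_coe_finset, corF,
    Finset.card_biUnion corF_disjoint]
  apply Finset.sum_congr rfl
  intro i _
  rw [Finset.card_product, Finset.card_singleton, one_mul, Nat.card_Ioc]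
  rfl

theorem chvol_eq_sum {ρF : Finset (Fin d → ℕ)} {π : (Fin d → ℕ) → ℕ}
    (hsupp : ∀ i, i ∉ ρF → π i = 0) :
    chvol π = ∑ i ∈ ρF, acell π i * ((∑ j, i j) + 1) := by
  rw [chvol, cor_set_eq hsupp, finsum_mem_coe_finset, corF,
    Finset.sum_biUnion (fun x hx y hy hxy => corF_disjoint x hx y hy hxy)]
  apply Finset.sum_congr rfl
  intro i _
  rw [Finset.sum_product, Finset.sum_singleton]
  have hconst : ∀ y ∈ Finset.Ioc (nmax π i) (π i),
      ((∑ j, (i, y).1 j) + 1) = ((∑ j, i j) + 1) := fun y _ => rfl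
  rw [Finset.sum_congr rfl hconst, Finset.sum_const, Nat.card_Ioc, smul_eq_mul]
  rfl

end HDPAux


open MvPowerSeries in
/-- Corner-hook generating function with fixed shape: with `t = X 0` and `q = X 1`,
`Σ_{sh(π) ⊆ ρ} t^{cor π} q^{|π|_ch} = ∏_{i ∈ ρ} (1 - t q^{i₁+⋯+i_d-d+1})⁻¹`
(in 0-based coordinates the cohook exponent is `(∑ j, i j) + 1`). -/
theorem cornerHook_generating_function_subshape {d : ℕ} (ρ : Set (Fin d → ℕ))
    (hfin : ρ.Finite) (hdown : DownClosed ρ) :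
    ∑' π : {π : (Fin d → ℕ) → ℕ // IsPartition π ∧ Function.support π ⊆ ρ},
        (X 0 : MvPowerSeries (Fin 2) ℚ) ^ cor π.1 * (X 1 : MvPowerSeries (Fin 2) ℚ) ^ chvol π.1
      = ∏ i ∈ hfin.toFinset,
          (1 - (X 0 : MvPowerSeries (Fin 2) ℚ) * (X 1 : MvPowerSeries (Fin 2) ℚ) ^ ((∑ j, i j) + 1))⁻¹ := by
  classical
  set ρF : Finset (Fin d → ℕ) := hfin.toFinset with hρF
  have hmem : ∀ i, i ∈ ρF ↔ i ∈ ρ := fun i => hfin.mem_toFinset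
  have hdc : ∀ i ℓ, step i ℓ ∈ ρF → i ∈ ρF := fun i ℓ h =>
    (hmem i).mpr (hdown i (step i ℓ) (HDPAux.le_step i ℓ) ((hmem _).mp h))
  set b : (Fin d → ℕ) → (Fin 2 →₀ ℕ) :=
    fun i => Finsupp.single 0 1 + Finsupp.single 1 ((∑ j, i j) + 1) with hbdef
  have hb : ∀ i, b i 0 = 1 := by
    intro i
    rw [hbdef]
    rw [Finsupp.add_apply, Finsupp.single_eq_same, Finsupp.single_eq_of_ne (by decide)]
    rfl
  let E : {π : (Fin d → ℕ) → ℕ // IsPartition π ∧ Function.support π ⊆ ρ}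
      ≃ {f : (Fin d → ℕ) → ℕ // ∀ i ∉ ρF, f i = 0} :=
  { toFun := fun π => ⟨HDPAux.acell π.1, fun i hi => by
      have hzero : π.1 i = 0 := by
        by_contra h
        exact hi ((hmem i).mpr (π.2.2 h))
      rw [HDPAux.acell, hzero]
      exact Nat.zero_sub _⟩
    invFun := fun f => ⟨HDPAux.build ρF f.1, HDPAux.build_isPartition hdc, fun i hi => by
      by_contra h
      exact (Function.mem_support.mp hi)
        (HDPAux.build_support i (fun hm => h ((hmem i).mp hm)))⟩
    left_inv := fun π => Subtype.ext (HDPAux.build_acell hdc π.2.1 (fun i hi => by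
      by_contra h
      exact hi ((hmem i).mpr (π.2.2 h))))
    right_inv := fun f => Subtype.ext (funext fun i => by
      show HDPAux.acell (HDPAux.build ρF f.1) i = f.1 i
      by_cases hi : i ∈ ρF
      · exact HDPAux.acell_build hi
      · rw [HDPAux.acell_build_of_not_mem hi, f.2 i hi]) }
  have hterm : ∀ f : {f : (Fin d → ℕ) → ℕ // ∀ i ∉ ρF, f i = 0},
      (X 0 : MvPowerSeries (Fin 2) ℚ) ^ cor (E.symm f).1
          * (X 1 : MvPowerSeries (Fin 2) ℚ) ^ chvol (E.symm f).1
        = monomial (∑ i ∈ ρF, f.1 i • b i) (1 : ℚ) := by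
    intro f
    have hsupp : ∀ i, i ∉ ρF → HDPAux.build ρF f.1 i = 0 := HDPAux.build_support
    have hcor : cor (E.symm f).1 = ∑ i ∈ ρF, f.1 i := by
      show cor (HDPAux.build ρF f.1) = _
      rw [HDPAux.cor_eq_sum hsupp]
      exact Finset.sum_congr rfl fun i hi => by rw [HDPAux.acell_build hi]
    have hch : chvol (E.symm f).1 = ∑ i ∈ ρF, f.1 i * ((∑ j, i j) + 1) := by
      show chvol (HDPAux.build ρF f.1) = _
      rw [HDPAux.chvol_eq_sum hsupp]
      exact Finset.sum_congr rfl fun i hi => by rw [HDPAux.acell_build hi]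
    rw [hcor, hch, X_pow_eq, X_pow_eq, monomial_mul_monomial, one_mul]
    congr 1
    have hsingle : ∀ i ∈ ρF, f.1 i • b i
        = Finsupp.single (0 : Fin 2) (f.1 i)
          + Finsupp.single (1 : Fin 2) (f.1 i * ((∑ j, i j) + 1)) := by
      intro i _
      rw [hbdef, smul_add, Finsupp.smul_single, Finsupp.smul_single, smul_eq_mul,
        smul_eq_mul, mul_one]
    have h0 : (Finsupp.single (0 : Fin 2) (∑ i ∈ ρF, f.1 i))
        = ∑ x ∈ ρF, Finsupp.single (0 : Fin 2) (f.1 x) :=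
      map_sum (Finsupp.singleAddHom (0 : Fin 2)) (fun x => f.1 x) ρF
    have h1 : (Finsupp.single (1 : Fin 2) (∑ i ∈ ρF, f.1 i * ((∑ j, i j) + 1)))
        = ∑ x ∈ ρF, Finsupp.single (1 : Fin 2) (f.1 x * ((∑ j, x j) + 1)) :=
      map_sum (Finsupp.singleAddHom (1 : Fin 2)) (fun x => f.1 x * ((∑ j, x j) + 1)) ρF
    rw [Finset.sum_congr rfl hsingle, Finset.sum_add_distrib, ← h0, ← h1]
  calc
    ∑' π : {π : (Fin d → ℕ) → ℕ // IsPartition π ∧ Function.support π ⊆ ρ},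
        (X 0 : MvPowerSeries (Fin 2) ℚ) ^ cor π.1
          * (X 1 : MvPowerSeries (Fin 2) ℚ) ^ chvol π.1
      = ∑' f : {f : (Fin d → ℕ) → ℕ // ∀ i ∉ ρF, f i = 0},
          (X 0 : MvPowerSeries (Fin 2) ℚ) ^ cor (E.symm f).1
            * (X 1 : MvPowerSeries (Fin 2) ℚ) ^ chvol (E.symm f).1 :=
        (Equiv.tsum_eq E.symm _).symm
    _ = ∑' f : {f : (Fin d → ℕ) → ℕ // ∀ i ∉ ρF, f i = 0},
          monomial (∑ i ∈ ρF, f.1 i • b i) (1 : ℚ) := tsum_congr hterm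
    _ = ∏ i ∈ ρF, (1 - monomial (b i) (1 : ℚ))⁻¹ := (key_hasSum b hb ρF).tsum_eq
    _ = ∏ i ∈ ρF,
          (1 - (X 0 : MvPowerSeries (Fin 2) ℚ)
            * (X 1 : MvPowerSeries (Fin 2) ℚ) ^ ((∑ j, i j) + 1))⁻¹ := by
        apply Finset.prod_congr rfl
        intro i _
        rw [hbdef, X_pow_eq, X_def, monomial_mul_monomial, one_mul]
end
end
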